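/- The limit of G_L(n)/n as n → ∞ equals 1 + √5, where G_L(n) is the Frobenius number of the tail {L_n, L_{n+1}, …} of the lower Wythoff sequence L_n = ⌊nφ⌋, φ = (1+√5)/2. -/

import Mathlib

noncomputable def phi : ℝ := (1 + Real.sqrt 5) / 2

/-- The lower Wythoff sequence. -/
noncomputable def lw (n : ℕ) : ℕ := ⌊(n : ℝ) * phi⌋₊

lemma phi_gt : (1.6 : ℝ) < phi := by
  unfold phi
  nlinarith [Real.sq_sqrt (show (0:ℝ) ≤ 5 by norm_num), Real.sqrt_nonneg 5]

lemma phi_lt : phi < (1.62 : ℝ) := by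
  unfold phi
  nlinarith [Real.sq_sqrt (show (0:ℝ) ≤ 5 by norm_num), Real.sqrt_nonneg 5]

lemma phi_irr : Irrational phi := by
  have h5 : Irrational (Real.sqrt 5) := (by norm_num : Nat.Prime 5).irrational_sqrt
  have h1 : Irrational ((1 : ℚ) + Real.sqrt 5) := h5.ratCast_add 1
  have h2 : Irrational ((1 + Real.sqrt 5) / (2:ℚ)) := by
    have := h1.div_ratCast (q := 2) (by norm_num)
    simpa using this
  unfold phi
  simpa using h2

lemma mphi_irr (m : ℕ) (hm : m ≠ 0) : Irrational ((m : ℝ) * phi) :=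
  phi_irr.natCast_mul hm

/-- fractional part of m*phi -/
noncomputable def fr (m : ℕ) : ℝ := (m : ℝ) * phi - (lw m : ℝ)

lemma phi_pos : (0:ℝ) < phi := by linarith [phi_gt]

lemma phi_pos' : (0:ℝ) < phi := by linarith [phi_gt]

lemma lw_le (m : ℕ) : (lw m : ℝ) ≤ (m : ℝ) * phi :=
  Nat.floor_le (mul_nonneg (Nat.cast_nonneg m) phi_pos'.le)

lemma lt_lw (m : ℕ) : (m : ℝ) * phi < (lw m : ℝ) + 1 :=
  Nat.lt_floor_add_one _

lemma fr_nonneg (m : ℕ) : 0 ≤ fr m := by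
  have := lw_le m; unfold fr; linarith

lemma fr_lt_one (m : ℕ) : fr m < 1 := by
  have := lt_lw m; unfold fr; linarith

lemma fr_pos (m : ℕ) (hm : m ≠ 0) : 0 < fr m := by
  rcases lt_or_eq_of_le (fr_nonneg m) with h | h
  · exact h
  · exfalso
    have : (m : ℝ) * phi = (lw m : ℕ) := by unfold fr at h; push_cast; linarith
    exact (mphi_irr m hm).ne_nat (lw m) this

lemma lw_mono {a b : ℕ} (h : a ≤ b) : lw a ≤ lw b := by
  apply Nat.floor_le_floor
  have : (a : ℝ) ≤ b := by exact_mod_cast h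
  nlinarith [phi_pos]

lemma fr_ne (m : ℕ) : fr m ≠ 2 - phi := by
  intro h
  have : ((m:ℝ) + 1) * phi = ((lw m + 2 : ℕ) : ℝ) := by
    unfold fr at h; push_cast; linarith
  have h2 := mphi_irr (m+1) (by omega)
  rw [show ((m+1 : ℕ) : ℝ) = (m:ℝ) + 1 by push_cast; ring] at h2
  exact h2.ne_nat _ this

lemma gap (m : ℕ) :
    (lw (m+1) = lw m + 1 ∧ fr (m+1) = fr m + (phi - 1)) ∨
    (lw (m+1) = lw m + 2 ∧ fr (m+1) = fr m - (2 - phi)) := by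
  have hmono : lw m ≤ lw (m+1) := lw_mono (by omega)
  obtain ⟨d, hd⟩ : ∃ d, lw (m+1) = lw m + d := ⟨lw (m+1) - lw m, by omega⟩
  have hcast : (d : ℝ) = fr m - fr (m+1) + phi := by
    have : ((lw (m+1) : ℕ) : ℝ) = (lw m : ℝ) + d := by rw [hd]; push_cast; ring
    unfold fr at *
    push_cast at *
    linarith
  have h0 := fr_nonneg m; have h1 := fr_lt_one m
  have h2 := fr_nonneg (m+1); have h3 := fr_lt_one (m+1)
  have hg := phi_gt; have hl := phi_lt
  have hd1 : 1 ≤ d := by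
    by_contra h
    have : d = 0 := by omega
    rw [this] at hcast; norm_num at hcast; linarith
  have hd2 : d ≤ 2 := by
    by_contra h
    have : (3 : ℝ) ≤ (d : ℝ) := by exact_mod_cast (by omega : 3 ≤ d)
    linarith
  interval_cases d
  · left
    refine ⟨hd, ?_⟩
    norm_num at hcast
    linarith
  · right
    refine ⟨hd, ?_⟩
    have : ((2:ℕ) : ℝ) = 2 := by norm_num
    rw [this] at hcast
    linarith

lemma gap2_of {m : ℕ} (h : 2 - phi < fr m) :
    lw (m+1) = lw m + 2 ∧ fr (m+1) = fr m - (2 - phi) := by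
  rcases gap m with ⟨h1, h2⟩ | hg
  · exfalso
    have := fr_lt_one (m+1)
    rw [h2] at this
    linarith
  · exact hg

lemma gap1_of {m : ℕ} (h : fr m < 2 - phi) :
    lw (m+1) = lw m + 1 ∧ fr (m+1) = fr m + (phi - 1) := by
  rcases gap m with hg | ⟨h1, h2⟩
  · exact hg
  · exfalso
    have := fr_nonneg (m+1)
    rw [h2] at this
    linarith

lemma window (n : ℕ) (hn : 1 ≤ n) : ∃ a, n ≤ a ∧ a ≤ n + 2 ∧ phi - 1 < fr a := by
  have hg := phi_gt; have hl := phi_lt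
  by_cases h1 : phi - 1 < fr n
  · exact ⟨n, le_refl _, by omega, h1⟩
  push_neg at h1
  rcases lt_or_gt_of_ne (fr_ne n) with h2 | h2
  · -- fr n < 2 - phi, gap 1 at n
    have e := (gap1_of h2).2
    have p := fr_pos n (by omega)
    exact ⟨n+1, by omega, by omega, by linarith⟩
  · -- 2 - phi < fr n ≤ phi - 1
    have e1 := (gap2_of h2).2
    have h3 : fr (n+1) < 2 - phi := by linarith
    have e2 := (gap1_of h3).2
    have p := fr_pos (n+1) (by omega)
    exact ⟨n+2, by omega, le_refl _, by linarith⟩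

lemma sum_eq (a b : ℕ) (hb : 1 ≤ b) (h : fr (a+b) < fr a) :
    lw a + lw b + 1 = lw (a+b) := by
  have key : ((lw (a+b) : ℕ) : ℝ) - (lw a : ℝ) - (lw b : ℝ) = fr a + fr b - fr (a+b) := by
    unfold fr; push_cast; ring
  have hfb := fr_pos b (by omega)
  have h0 := fr_nonneg (a+b)
  have h1 := fr_lt_one a; have h2 := fr_lt_one b
  have hlt : lw a + lw b < lw (a+b) := by
    have : ((lw a + lw b : ℕ) : ℝ) < ((lw (a+b) : ℕ) : ℝ) := by push_cast; linarith
    exact_mod_cast this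
  have hgt : lw (a+b) < lw a + lw b + 2 := by
    have : ((lw (a+b) : ℕ) : ℝ) < ((lw a + lw b + 2 : ℕ) : ℝ) := by push_cast; linarith
    exact_mod_cast this
  omega

lemma mem_of_ge (n k : ℕ) (hn : 1 ≤ n) (hk : lw (2*n+2) ≤ k) :
    k ∈ AddSubmonoid.closure {x : ℕ | ∃ j, n ≤ j ∧ x = lw j} := by
  classical
  have hex : ∃ j, k < lw j := by
    refine ⟨k + 1, ?_⟩
    have : ((k+1 : ℕ) : ℝ) ≤ ((k+1 : ℕ) : ℝ) * phi := by
      nlinarith [phi_gt, (by positivity : (0:ℝ) ≤ ((k+1 : ℕ) : ℝ))]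
    have := Nat.le_floor this
    unfold lw
    omega
  have hMspec : k < lw (Nat.find hex) := Nat.find_spec hex
  have hM0 : Nat.find hex ≠ 0 := by
    intro h
    rw [h] at hMspec
    have : lw 0 = 0 := by unfold lw; simp
    omega
  obtain ⟨m, hm⟩ : ∃ m, Nat.find hex = m + 1 := ⟨Nat.find hex - 1, by omega⟩
  rw [hm] at hMspec
  have hmle : lw m ≤ k := by
    have := Nat.find_min hex (m := m) (by omega)
    omega
  have hmge : 2*n+2 ≤ m := by
    by_contra h
    have : lw (m+1) ≤ lw (2*n+2) := lw_mono (by omega)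
    omega
  rcases gap m with ⟨h1, _⟩ | ⟨h1, h2⟩
  · -- gap 1 : k = lw m
    have : k = lw m := by omega
    exact AddSubmonoid.subset_closure ⟨m, by omega, this⟩
  · -- gap 2
    rcases (by omega : k = lw m ∨ k = lw m + 1) with hk' | hk'
    · exact AddSubmonoid.subset_closure ⟨m, by omega, hk'⟩
    · obtain ⟨a, ha1, ha2, ha3⟩ := window n hn
      have hfm1 : fr (m+1) < phi - 1 := by
        have := fr_lt_one m
        linarith
      set b := m + 1 - a with hb
      have hab : a + b = m + 1 := by omega
      have hbn : n ≤ b := by omega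
      have hsum := sum_eq a b (by omega) (by rw [hab]; linarith)
      rw [hab] at hsum
      have hkab : k = lw a + lw b := by omega
      rw [hkab]
      exact AddSubmonoid.add_mem _ (AddSubmonoid.subset_closure ⟨a, ha1, rfl⟩)
        (AddSubmonoid.subset_closure ⟨b, hbn, rfl⟩)

lemma not_mem (n k m : ℕ) (hk : k = lw m + 1) (hgap : lw (m+1) = lw m + 2)
    (hlow : lw n ≤ lw m) (hhigh : k < 2 * lw n) :
    k ∉ AddSubmonoid.closure {x : ℕ | ∃ j, n ≤ j ∧ x = lw j} := by
  intro hmem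
  have P : k = 0 ∨ (∃ j, n ≤ j ∧ k = lw j) ∨ 2 * lw n ≤ k := by
    refine AddSubmonoid.closure_induction
      (motive := fun x _ => x = 0 ∨ (∃ j, n ≤ j ∧ x = lw j) ∨ 2 * lw n ≤ x)
      (fun x hx => Or.inr (Or.inl hx)) (Or.inl rfl) ?_ hmem
    rintro x y _ _ (rfl | ⟨j, hj, rfl⟩ | hx) (rfl | ⟨j', hj', rfl⟩ | hy)
    · exact Or.inl (by omega)
    · exact Or.inr (Or.inl ⟨j', hj', by omega⟩)
    · exact Or.inr (Or.inr (by omega))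
    · exact Or.inr (Or.inl ⟨j, hj, by omega⟩)
    · have := lw_mono hj; have := lw_mono hj'
      exact Or.inr (Or.inr (by omega))
    · exact Or.inr (Or.inr (by omega))
    · exact Or.inr (Or.inr (by omega))
    · exact Or.inr (Or.inr (by omega))
    · exact Or.inr (Or.inr (by omega))
  rcases P with h | ⟨j, hj, hj'⟩ | h
  · omega
  · rcases le_or_gt j m with hle | hlt
    · have := lw_mono hle; omega
    · have := lw_mono (show m + 1 ≤ j by omega); omega
  · omega

lemma lw2n1_le (n : ℕ) (hn : 1 ≤ n) : lw (2*n - 1) ≤ 2 * lw n := by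
  have h1 : (lw (2*n-1) : ℝ) ≤ ((2*n-1 : ℕ) : ℝ) * phi := lw_le _
  have h2 : (n : ℝ) * phi < (lw n : ℝ) + 1 := lt_lw n
  have hcast : ((2*n-1 : ℕ) : ℝ) = 2*(n:ℝ) - 1 := by
    push_cast [Nat.cast_sub (by omega : 1 ≤ 2*n)]; ring
  have hg := phi_gt
  have : (lw (2*n-1) : ℝ) < ((2 * lw n + 1 : ℕ) : ℝ) := by
    rw [hcast] at h1
    push_cast
    nlinarith
  have := (Nat.cast_lt (α := ℝ)).mp this
  omega

lemma exists_nonmem (n : ℕ) (hn : 3 ≤ n) :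
    ∃ k, k ∉ AddSubmonoid.closure {x : ℕ | ∃ j, n ≤ j ∧ x = lw j} ∧
      ((2*n-3 : ℕ) : ℝ) * phi < (k : ℝ) := by
  have hg := phi_gt; have hl := phi_lt
  set p := 2*n - 3 with hp
  have hp1 : 1 ≤ p := by omega
  -- find gap-2 index m ∈ {p, p+1}
  have hmain : ∃ m, p ≤ m ∧ m + 1 ≤ p + 2 ∧ lw (m+1) = lw m + 2 := by
    rcases lt_or_gt_of_ne (fr_ne p) with h2 | h2
    · -- fr p < 2 - phi : gap 1 at p, fr (p+1) = fr p + phi - 1 > 2 - phi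
      have e := (gap1_of h2).2
      have hpos := fr_pos p (by omega)
      have : 2 - phi < fr (p+1) := by linarith
      exact ⟨p+1, by omega, by omega, (gap2_of this).1⟩
    · exact ⟨p, le_refl _, by omega, (gap2_of h2).1⟩
  obtain ⟨m, hm1, hm2, hgap⟩ := hmain
  refine ⟨lw m + 1, ?_, ?_⟩
  · apply not_mem n _ m rfl hgap (lw_mono (by omega))
    -- lw m + 1 < 2 * lw n
    have h1 : lw (m+1) ≤ lw (p+2) := lw_mono hm2
    have h2 : lw (p+2) ≤ 2 * lw n := by
      have : p + 2 = 2*n - 1 := by omega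
      rw [this]
      exact lw2n1_le n (by omega)
    omega
  · have h1 : lw p ≤ lw m := lw_mono hm1
    have h2 : ((p : ℕ) : ℝ) * phi < (lw p : ℝ) + 1 := lt_lw p
    have : ((lw m + 1 : ℕ) : ℝ) ≥ ((lw p + 1 : ℕ) : ℝ) := by
      exact_mod_cast (by omega : lw p + 1 ≤ lw m + 1)
    push_cast at this ⊢
    linarith

theorem frobenius_lower_wythoff_limit (G : ℕ → ℕ)
    (hG : ∀ n, 1 ≤ n → FrobeniusNumber (G n) {x : ℕ | ∃ j, n ≤ j ∧ x = lw j}) :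
    Filter.Tendsto (fun n : ℕ => (G n : ℝ) / n) Filter.atTop
      (nhds (1 + Real.sqrt 5)) := by
  have hg := phi_gt; have hl := phi_lt
  have h2phi : 2 * phi = 1 + Real.sqrt 5 := by unfold phi; ring
  rw [← h2phi]
  have key : ∀ n : ℕ, 3 ≤ n →
      2 * phi - 6 / (n : ℝ) ≤ (G n : ℝ) / n ∧ (G n : ℝ) / n ≤ 2 * phi + 6 / (n : ℝ) := by
    intro n hn
    have hGn := hG n (by omega)
    obtain ⟨hGmem, hGub⟩ := hGn
    have hnpos : (0:ℝ) < (n : ℝ) := by positivity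
    -- upper bound: G n < lw (2n+2)
    have hup : (G n : ℝ) ≤ 2 * (n:ℝ) * phi + 6 := by
      have h1 : G n < lw (2*n+2) := by
        by_contra h
        push_neg at h
        exact hGmem (mem_of_ge n (G n) (by omega) h)
      have h2 : ((G n : ℕ) : ℝ) < ((lw (2*n+2) : ℕ) : ℝ) := by exact_mod_cast h1
      have h3 : (lw (2*n+2) : ℝ) ≤ ((2*n+2 : ℕ) : ℝ) * phi := lw_le _
      push_cast at h2 h3
      nlinarith
    -- lower bound
    have hlow : 2 * (n:ℝ) * phi - 6 ≤ (G n : ℝ) := by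
      obtain ⟨k, hknot, hkgt⟩ := exists_nonmem n hn
      have hkle : k ≤ G n := hGub hknot
      have : ((2*n-3 : ℕ) : ℝ) = 2*(n:ℝ) - 3 := by
        push_cast [Nat.cast_sub (by omega : 3 ≤ 2*n)]; ring
      rw [this] at hkgt
      have : (k : ℝ) ≤ (G n : ℝ) := by exact_mod_cast hkle
      nlinarith
    have hne : (n:ℝ) ≠ 0 := hnpos.ne'
    constructor
    · rw [← sub_nonneg]
      have e : (G n : ℝ) / n - (2 * phi - 6 / n) = ((G n : ℝ) - (2*(n:ℝ)*phi - 6)) / n := by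
        field_simp
      rw [e]
      apply div_nonneg _ hnpos.le
      linarith
    · rw [← sub_nonneg]
      have e : 2 * phi + 6 / (n:ℝ) - (G n : ℝ) / n = ((2*(n:ℝ)*phi + 6) - (G n : ℝ)) / n := by
        field_simp
      rw [e]
      apply div_nonneg _ hnpos.le
      linarith
  have hlim1 : Filter.Tendsto (fun n : ℕ => 2 * phi - 6 / (n : ℝ)) Filter.atTop
      (nhds (2 * phi)) := by
    have := (tendsto_const_div_atTop_nhds_zero_nat (𝕜 := ℝ) 6)
    have h := Filter.Tendsto.sub (tendsto_const_nhds (x := 2 * phi)) this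
    simpa using h
  have hlim2 : Filter.Tendsto (fun n : ℕ => 2 * phi + 6 / (n : ℝ)) Filter.atTop
      (nhds (2 * phi)) := by
    have := (tendsto_const_div_atTop_nhds_zero_nat (𝕜 := ℝ) 6)
    have h := Filter.Tendsto.add (tendsto_const_nhds (x := 2 * phi)) this
    simpa using h
  refine tendsto_of_tendsto_of_tendsto_of_le_of_le' hlim1 hlim2 ?_ ?_
  · filter_upwards [Filter.eventually_ge_atTop 3] with n hn
    exact (key n hn).1
  · filter_upwards [Filter.eventually_ge_atTop 3] with n hn
    exact (key n hn).2
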